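/- Let δ, η ∈ ℝ with 0 ≤ η ≤ min{δ², δ}, and work in ℝ^d with d ≥ 2. Then κ∘(δ,η) = √(1 − η²/δ²), where κ∘(δ,η) is the supremum over u, z ∈ ℝ^d with ‖u‖₂ = 1, ‖z‖₂ ≤ δ, uᵀz ≥ η of min_{β∈[0,1]} ‖u − βz‖₂. -/

import Mathlib

open RealInnerProductSpace

/-- `κ∘(δ,η)`: the supremum over `(u,z)` with `‖u‖ = 1`, `‖z‖ ≤ δ`, `⟪u,z⟫ ≥ η` of
`min_{β ∈ [0,1]} ‖u - β z‖`. -/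
noncomputable def kappaCirc (d : ℕ) (δ η : ℝ) : ℝ :=
  sSup {m : ℝ | ∃ u z : EuclideanSpace ℝ (Fin d), ‖u‖ = 1 ∧ ‖z‖ ≤ δ ∧ ⟪u, z⟫ ≥ η ∧
    m = sInf {t : ℝ | ∃ β ∈ Set.Icc (0:ℝ) 1, t = ‖u - β • z‖}}


variable {E : Type*} [NormedAddCommGroup E] [InnerProductSpace ℝ E]

lemma aux_normsq (u z : E) (β : ℝ) :
    ‖u - β • z‖ ^ 2 = ‖u‖ ^ 2 - 2 * β * ⟪u, z⟫ + β ^ 2 * ‖z‖ ^ 2 := by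
  rw [norm_sub_sq_real, real_inner_smul_right, norm_smul]
  simp [Real.norm_eq_abs, mul_pow, sq_abs]
  ring

lemma aux_bddBelow (u z : E) :
    BddBelow {t : ℝ | ∃ β ∈ Set.Icc (0:ℝ) 1, t = ‖u - β • z‖} :=
  ⟨0, fun t ⟨β, _, ht⟩ => ht ▸ norm_nonneg _⟩

/-- Upper bound for the inner minimum for any feasible pair. -/
lemma aux_upper (δ η : ℝ) (hη0 : 0 ≤ η) (hηδ2 : η ≤ δ ^ 2) (hηδ : η ≤ δ)
    (u z : E) (hu : ‖u‖ = 1) (hz : ‖z‖ ≤ δ) (hin : η ≤ ⟪u, z⟫) :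
    sInf {t : ℝ | ∃ β ∈ Set.Icc (0:ℝ) 1, t = ‖u - β • z‖} ≤
      Real.sqrt (1 - η ^ 2 / δ ^ 2) := by
  set c := ⟪u, z⟫ with hc
  have hs : ‖z‖ ^ 2 ≤ δ ^ 2 := by nlinarith [norm_nonneg z]
  by_cases hzero : z = 0
  · have hη' : η = 0 := le_antisymm (by simpa [hzero, hc] using hin) hη0
    apply csInf_le_of_le (aux_bddBelow u z) ⟨0, ⟨le_refl 0, zero_le_one⟩, rfl⟩
    simp [hzero, hu, hη']
  · have hzpos : 0 < ‖z‖ ^ 2 := pow_pos (norm_pos_iff.mpr hzero) 2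
    have hδ2pos : 0 < δ ^ 2 := lt_of_lt_of_le hzpos hs
    have hc0 : 0 ≤ c := le_trans hη0 hin
    have hR0 : 0 ≤ 1 - η ^ 2 / δ ^ 2 := by
      have : η ^ 2 / δ ^ 2 ≤ 1 := by
        rw [div_le_one hδ2pos]; nlinarith
      linarith
    by_cases hcs : c ≤ ‖z‖ ^ 2
    · -- β = c / ‖z‖²
      set β := c / ‖z‖ ^ 2 with hβ
      have hβ0 : 0 ≤ β := div_nonneg hc0 (le_of_lt hzpos)
      have hβ1 : β ≤ 1 := (div_le_one hzpos).mpr hcs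
      apply csInf_le_of_le (aux_bddBelow u z) ⟨β, ⟨hβ0, hβ1⟩, rfl⟩
      rw [Real.le_sqrt (norm_nonneg _) hR0, aux_normsq, hu]
      have key : η ^ 2 / δ ^ 2 ≤ c ^ 2 / ‖z‖ ^ 2 := by
        rw [div_le_div_iff₀ hδ2pos hzpos]
        have h1 : η ^ 2 ≤ c ^ 2 := by nlinarith
        nlinarith [mul_le_mul_of_nonneg_right h1 hzpos.le,
          mul_le_mul_of_nonneg_left hs (sq_nonneg c)]
      have heq : 1 ^ 2 - 2 * β * c + β ^ 2 * ‖z‖ ^ 2 = 1 - c ^ 2 / ‖z‖ ^ 2 := by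
        rw [hβ]; field_simp; ring
      rw [heq]; linarith
    · -- β = 1
      push_neg at hcs
      apply csInf_le_of_le (aux_bddBelow u z) ⟨1, ⟨zero_le_one, le_refl 1⟩, rfl⟩
      rw [Real.le_sqrt (norm_nonneg _) hR0, aux_normsq, hu]
      have key : η ^ 2 / δ ^ 2 ≤ η := by
        rw [div_le_iff₀ hδ2pos]; nlinarith
      nlinarith

/-- Exact value of the inner minimum for the extremal pair. -/
lemma aux_val (δ η : ℝ) (hη0 : 0 ≤ η) (hηδ2 : η ≤ δ ^ 2)
    (u z : E) (hu : ‖u‖ = 1) (hz : ‖z‖ ^ 2 = δ ^ 2) (hin : ⟪u, z⟫ = η) :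
    sInf {t : ℝ | ∃ β ∈ Set.Icc (0:ℝ) 1, t = ‖u - β • z‖} =
      Real.sqrt (1 - η ^ 2 / δ ^ 2) := by
  by_cases hδ : δ = 0
  · subst hδ
    have hη' : η = 0 := le_antisymm (by simpa using hηδ2) hη0
    have hz0 : z = 0 := by
      have : ‖z‖ = 0 := by nlinarith [norm_nonneg z]
      simpa using this
    have hset : {t : ℝ | ∃ β ∈ Set.Icc (0:ℝ) 1, t = ‖u - β • z‖} = {1} := by
      ext t
      simp only [Set.mem_setOf_eq, Set.mem_singleton_iff]
      constructor
      · rintro ⟨β, _, rfl⟩; simp [hz0, hu]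
      · rintro rfl; exact ⟨0, ⟨le_refl 0, zero_le_one⟩, by simp [hz0, hu]⟩
    rw [hset, csInf_singleton, hη']
    norm_num
  · have hδ2pos : 0 < δ ^ 2 := by positivity
    apply le_antisymm
    · set β := η / δ ^ 2 with hβ
      have hβ0 : 0 ≤ β := div_nonneg hη0 hδ2pos.le
      have hβ1 : β ≤ 1 := (div_le_one hδ2pos).mpr hηδ2
      apply csInf_le_of_le (aux_bddBelow u z) ⟨β, ⟨hβ0, hβ1⟩, rfl⟩
      apply le_of_eq
      rw [← Real.sqrt_sq (norm_nonneg (u - β • z)), aux_normsq, hu, hin, hz]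
      congr 1
      rw [hβ]; field_simp
      ring
    · have hmem : ‖u - (0:ℝ) • z‖ ∈ {t : ℝ | ∃ β ∈ Set.Icc (0:ℝ) 1, t = ‖u - β • z‖} :=
        ⟨0, ⟨le_refl 0, zero_le_one⟩, rfl⟩
      apply le_csInf ⟨_, hmem⟩
      rintro t ⟨β, hβ, rfl⟩
      rw [← Real.sqrt_sq (norm_nonneg (u - β • z)), aux_normsq, hu, hin, hz]
      apply Real.sqrt_le_sqrt
      have : 2 * β * η - β ^ 2 * δ ^ 2 ≤ η ^ 2 / δ ^ 2 := by
        rw [le_div_iff₀ hδ2pos]; nlinarith [sq_nonneg (β * δ ^ 2 - η)]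
      linarith

/-- If `0 ≤ η ≤ min{δ², δ}` and `d ≥ 2`, then `κ∘(δ,η) = √(1 - η²/δ²)`. -/
theorem stmt10 (d : ℕ) (hd : 2 ≤ d) (δ η : ℝ) (hη0 : 0 ≤ η) (hη : η ≤ min (δ ^ 2) δ) :
    kappaCirc d δ η = Real.sqrt (1 - η ^ 2 / δ ^ 2) := by
  have hηδ2 : η ≤ δ ^ 2 := le_trans hη (min_le_left _ _)
  have hηδ : η ≤ δ := le_trans hη (min_le_right _ _)
  have hδ0 : 0 ≤ δ := le_trans hη0 hηδ
  set R := Real.sqrt (1 - η ^ 2 / δ ^ 2) with hR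
  set i0 : Fin d := ⟨0, by omega⟩ with hi0
  set i1 : Fin d := ⟨1, by omega⟩ with hi1
  have hne : i0 ≠ i1 := by simp [hi0, hi1, Fin.ext_iff]
  set cc := Real.sqrt (δ ^ 2 - η ^ 2) with hccdef
  have hcc2 : cc ^ 2 = δ ^ 2 - η ^ 2 := Real.sq_sqrt (by nlinarith)
  set u : EuclideanSpace ℝ (Fin d) := EuclideanSpace.single i0 1 with hudef
  set z : EuclideanSpace ℝ (Fin d) :=
    EuclideanSpace.single i0 η + EuclideanSpace.single i1 cc with hzdef
  have hu : ‖u‖ = 1 := by simp [hudef]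
  have hinner : ⟪u, z⟫ = η := by
    simp [hudef, hzdef, inner_add_right, EuclideanSpace.inner_single_left,
      EuclideanSpace.single_apply, hne, hne.symm]
  have hznormsq : ‖z‖ ^ 2 = δ ^ 2 := by
    have : ⟪z, z⟫ = δ ^ 2 := by
      rw [hzdef, inner_add_left, inner_add_right, inner_add_right]
      simp [hzdef, inner_add_left, inner_add_right, EuclideanSpace.inner_single_left,
        EuclideanSpace.single_apply, hne, hne.symm]
      nlinarith
    rw [← real_inner_self_eq_norm_sq, this]
  have hznorm : ‖z‖ = δ := by
    rw [← Real.sqrt_sq (norm_nonneg z), hznormsq, Real.sqrt_sq hδ0]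
  have hWm : R ∈ {m : ℝ | ∃ u z : EuclideanSpace ℝ (Fin d), ‖u‖ = 1 ∧ ‖z‖ ≤ δ ∧ ⟪u, z⟫ ≥ η ∧
      m = sInf {t : ℝ | ∃ β ∈ Set.Icc (0:ℝ) 1, t = ‖u - β • z‖}} :=
    ⟨u, z, hu, le_of_eq hznorm, le_of_eq hinner.symm,
      (aux_val δ η hη0 hηδ2 u z hu hznormsq hinner).symm⟩
  have hub : ∀ m ∈ {m : ℝ | ∃ u z : EuclideanSpace ℝ (Fin d), ‖u‖ = 1 ∧ ‖z‖ ≤ δ ∧ ⟪u, z⟫ ≥ η ∧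
      m = sInf {t : ℝ | ∃ β ∈ Set.Icc (0:ℝ) 1, t = ‖u - β • z‖}}, m ≤ R := by
    rintro m ⟨u', z', hu', hz', hin', rfl⟩
    exact aux_upper δ η hη0 hηδ2 hηδ u' z' hu' hz' hin'
  exact le_antisymm (csSup_le ⟨R, hWm⟩ hub) (le_csSup ⟨R, hub⟩ hWm)
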